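/- arXiv:2107.14234 — 4 statements merged into one kernel-verified Lean document; each statement's English description precedes it below -/
import Mathlib

section
/- Let the ellipses E: (x-a+β)²/β² + y²/α² = 1 and C: x²/a² + y²/b² = 1 satisfy a ≥ b ≥ α ≥ β > 0 and β < a. If (x,y) lies on both E and C, then either x = a (and y = 0) or x = a(a²α² - 2aα²β + b²β²)/(a²α² - b²β²) with y² = -4aα²b²β(a-β)(b²β - aα²)/((bβ - aα)²(aα + bβ)²). -/
/-- Intersection points of the small ellipse `E : (x-a+β)²/β² + y²/α² = 1` and the
ellipse `C : x²/a² + y²/b² = 1` with `a ≥ b ≥ α ≥ β > 0` and `β < a`. -/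
theorem ellipse_ellipse_intersection_points (a b α β x y : ℝ)
    (hβ : 0 < β) (hβα : β ≤ α) (hαb : α ≤ b) (hba : b ≤ a) (hβa : β < a)
    (hE : (x - a + β) ^ 2 / β ^ 2 + y ^ 2 / α ^ 2 = 1)
    (hC : x ^ 2 / a ^ 2 + y ^ 2 / b ^ 2 = 1) :
    (x = a ∧ y = 0) ∨
    (x = a * (a ^ 2 * α ^ 2 - 2 * a * α ^ 2 * β + b ^ 2 * β ^ 2) /
        (a ^ 2 * α ^ 2 - b ^ 2 * β ^ 2) ∧
      y ^ 2 = -(4 * a * α ^ 2 * b ^ 2 * β * (a - β) * (b ^ 2 * β - a * α ^ 2)) /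
        ((b * β - a * α) ^ 2 * (a * α + b * β) ^ 2)) := by
  have hα : 0 < α := lt_of_lt_of_le hβ hβα
  have hb : 0 < b := lt_of_lt_of_le hα hαb
  have ha : 0 < a := lt_of_lt_of_le hb hba
  have h1 : α^2*(x - a + β)^2 + β^2*y^2 = α^2*β^2 := by
    field_simp at hE
    linear_combination hE
  have h2 : b^2*x^2 + a^2*y^2 = a^2*b^2 := by
    field_simp at hC
    linear_combination hC
  have key : (x - a) * (α^2*a^2*(x - a) + 2*α^2*a^2*β - β^2*b^2*(a + x)) = 0 := by
    linear_combination a^2 * h1 - β^2 * h2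
  rcases mul_eq_zero.mp key with h | hG
  · left
    have hx : x = a := by linarith
    have h5 : a^2 * y^2 = 0 := by rw [hx] at h2; linarith
    have hy2 : y ^ 2 = 0 :=
      (mul_eq_zero.mp h5).resolve_left (by positivity)
    exact ⟨hx, (pow_eq_zero_iff two_ne_zero).mp hy2⟩
  · right
    -- D ≠ 0
    have hD : a^2*α^2 - b^2*β^2 ≠ 0 := by
      intro hD0
      have h0 : (2*a^2*α^2) * (β - a) = 0 := by
        linear_combination hG - (x + a) * hD0
      rcases mul_eq_zero.mp h0 with h0' | h0'
      · exact absurd h0' (by positivity)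
      · linarith
    have hF : x * (a^2*α^2 - b^2*β^2)
        = a * (a ^ 2 * α ^ 2 - 2 * a * α ^ 2 * β + b ^ 2 * β ^ 2) := by
      linear_combination hG
    constructor
    · rw [eq_div_iff hD]
      linear_combination hF
    · have h3 : a*α - b*β ≠ 0 := by
        intro h0
        apply hD
        linear_combination (a*α + b*β) * h0
      have h4 : a*α + b*β ≠ 0 := by positivity
      have hden : ((b * β - a * α) ^ 2 * (a * α + b * β) ^ 2) ≠ 0 := by
        apply mul_ne_zero <;> apply pow_ne_zero
        · intro h0; exact h3 (by linarith)
        · exact h4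
      rw [eq_div_iff hden]
      have hy : a^2 * (y ^ 2 * ((b * β - a * α) ^ 2 * (a * α + b * β) ^ 2))
          = a^2 * (-(4 * a * α ^ 2 * b ^ 2 * β * (a - β) * (b ^ 2 * β - a * α ^ 2))) := by
        linear_combination ((a^2*α^2 - b^2*β^2)^2) * h2
          - (b^2*(x*(a^2*α^2 - b^2*β^2) + a*(a^2*α^2 - 2*a*α^2*β + b^2*β^2))) * hF
      exact mul_left_cancel₀ (by positivity : (a:ℝ)^2 ≠ 0) hy
end

section
/- Let α ≥ β > 0 and a > 0. The ellipse E: x²/α² + (y-β)²/β² = 1 and the parabola P: y = x²/a² intersect only at the origin (0,0) if and only if 2/a² ≤ β/α². -/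
/-- The ellipse `E : x²/α² + (y-β)²/β² = 1` (with `α ≥ β > 0`) and the parabola
`P : y = x²/a²` intersect only at the origin iff `2/a² ≤ β/α²`. -/
theorem ellipse_parabola_tangent_only_iff (a α β : ℝ)
    (hβ : 0 < β) (hβα : β ≤ α) (ha : 0 < a) :
    (∀ x y : ℝ, x ^ 2 / α ^ 2 + (y - β) ^ 2 / β ^ 2 = 1 →
      y = x ^ 2 / a ^ 2 → x = 0 ∧ y = 0) ↔
    2 / a ^ 2 ≤ β / α ^ 2 := by
  have hα : 0 < α := lt_of_lt_of_le hβ hβα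
  have hα2 : (0:ℝ) < α ^ 2 := by positivity
  have ha2 : (0:ℝ) < a ^ 2 := by positivity
  have hβ2 : (0:ℝ) < β ^ 2 := by positivity
  constructor
  · intro h
    by_contra hc
    push_neg at hc
    -- hc : β / α ^ 2 < 2 / a ^ 2, hence 2 * α ^ 2 > a ^ 2 * β
    have hkey : a ^ 2 * β < 2 * α ^ 2 := by
      have := (div_lt_div_iff₀ hα2 ha2).mp hc
      nlinarith
    set y0 : ℝ := 2 * β - a ^ 2 * β ^ 2 / α ^ 2 with hy0def
    have hy0 : 0 < y0 := by
      rw [hy0def, sub_pos, div_lt_iff₀ hα2]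
      nlinarith
    set x0 : ℝ := a * Real.sqrt y0 with hx0def
    have hx2 : x0 ^ 2 = a ^ 2 * y0 := by
      rw [hx0def, mul_pow, Real.sq_sqrt hy0.le]
    have hE : x0 ^ 2 / α ^ 2 + (y0 - β) ^ 2 / β ^ 2 = 1 := by
      rw [hx2, hy0def]
      field_simp
      ring
    have hP : y0 = x0 ^ 2 / a ^ 2 := by
      rw [hx2]
      field_simp
    obtain ⟨hx0z, -⟩ := h x0 y0 hE hP
    have : 0 < x0 := by
      rw [hx0def]
      exact mul_pos ha (Real.sqrt_pos.mpr hy0)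
    linarith
  · intro h x y hE hP
    have h2 : 2 * α ^ 2 ≤ a ^ 2 * β := by
      have := (div_le_div_iff₀ ha2 hα2).mp h
      nlinarith
    have hx2 : x ^ 2 = a ^ 2 * y := by
      rw [hP]; field_simp
    have hy : 0 ≤ y := by nlinarith [sq_nonneg x]
    have hq : y * (a ^ 2 * β ^ 2 + y * α ^ 2 - 2 * β * α ^ 2) = 0 := by
      have := hE
      rw [hx2] at this
      field_simp at this
      nlinarith [this]
    have hyz : y = 0 := by
      by_contra hne
      have hypos : 0 < y := lt_of_le_of_ne hy (Ne.symm hne)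
      rcases mul_eq_zero.mp hq with h0 | h0
      · exact hne h0
      · nlinarith [mul_pos hypos hα2, mul_le_mul_of_nonneg_right h2 hβ.le]
    have hxz : x = 0 := by
      have : x ^ 2 = 0 := by rw [hx2, hyz, mul_zero]
      exact pow_eq_zero_iff (n := 2) (by norm_num) |>.mp this
    exact ⟨hxz, hyz⟩
end

section
/- Let α ≥ β > 0 and a, b > 0. Consider the ellipse E: (x-a-β)²/β² + y²/α² = 1 tangent to the hyperbola H: x²/a² - y²/b² = 1 at the vertex (a,0). Then E and H intersect only at (a,0) if and only if a/b² ≤ β/α². -/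
/-- The ellipse `E : (x-a-β)²/β² + y²/α² = 1` (with `α ≥ β > 0`) and the hyperbola
`H : x²/a² - y²/b² = 1` intersect only at the vertex `(a,0)` iff `a/b² ≤ β/α²`. -/
theorem ellipse_hyperbola_tangent_only_iff (a b α β : ℝ)
    (hβ : 0 < β) (hβα : β ≤ α) (ha : 0 < a) (hb : 0 < b) :
    (∀ x y : ℝ, (x - a - β) ^ 2 / β ^ 2 + y ^ 2 / α ^ 2 = 1 →
      x ^ 2 / a ^ 2 - y ^ 2 / b ^ 2 = 1 → x = a ∧ y = 0) ↔
    a / b ^ 2 ≤ β / α ^ 2 := by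
  have hα : (0:ℝ) < α := lt_of_lt_of_le hβ hβα
  have hα2 : (0:ℝ) < α ^ 2 := by positivity
  have hβ2 : (0:ℝ) < β ^ 2 := by positivity
  have ha2 : (0:ℝ) < a ^ 2 := by positivity
  have hb2 : (0:ℝ) < b ^ 2 := by positivity
  have hD : (0:ℝ) < a ^ 2 * α ^ 2 + β ^ 2 * b ^ 2 := by positivity
  constructor
  · intro h
    by_contra hcon
    push_neg at hcon
    have hkey : β * b ^ 2 < a * α ^ 2 := by
      rw [div_lt_div_iff₀ hα2 hb2] at hcon; linarith
    obtain ⟨u, hu0, hu2, hueq⟩ :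
        ∃ u : ℝ, 0 < u ∧ u < 2 * β ∧
          u * (a ^ 2 * α ^ 2 + β ^ 2 * b ^ 2) = 2 * a * β * (a * α ^ 2 - β * b ^ 2) := by
      refine ⟨2 * a * β * (a * α ^ 2 - β * b ^ 2) / (a ^ 2 * α ^ 2 + β ^ 2 * b ^ 2), ?_, ?_, ?_⟩
      · apply div_pos _ hD
        nlinarith [mul_pos (mul_pos (mul_pos two_pos ha) hβ) (sub_pos.mpr hkey)]
      · rw [div_lt_iff₀ hD]
        nlinarith [mul_pos (mul_pos hβ2 hb2) ha, mul_pos (mul_pos hβ2 hb2) hβ]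
      · field_simp
    have hynn : 0 ≤ α ^ 2 * u * (2 * β - u) / β ^ 2 :=
      div_nonneg (mul_nonneg (mul_nonneg hα2.le hu0.le) (by linarith)) hβ2.le
    have hy2 : (Real.sqrt (α ^ 2 * u * (2 * β - u) / β ^ 2)) ^ 2
        = α ^ 2 * u * (2 * β - u) / β ^ 2 := Real.sq_sqrt hynn
    have he : (a + u - a - β) ^ 2 / β ^ 2
        + (Real.sqrt (α ^ 2 * u * (2 * β - u) / β ^ 2)) ^ 2 / α ^ 2 = 1 := by
      rw [hy2]; field_simp; ring
    have hh : (a + u) ^ 2 / a ^ 2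
        - (Real.sqrt (α ^ 2 * u * (2 * β - u) / β ^ 2)) ^ 2 / b ^ 2 = 1 := by
      rw [hy2]
      field_simp
      linear_combination u * hueq
    have := (h (a + u) _ he hh).1
    linarith
  · intro hle x y he hh
    have hkey : a * α ^ 2 ≤ β * b ^ 2 := by
      rw [div_le_div_iff₀ hb2 hα2] at hle; linarith
    have hy0 : 0 ≤ y ^ 2 := sq_nonneg y
    have he' : y ^ 2 * β ^ 2 = α ^ 2 * ((x - a) * (2 * β - (x - a))) := by
      field_simp [hα.ne', hβ.ne'] at he; linear_combination he
    have hh' : y ^ 2 * a ^ 2 = b ^ 2 * ((x - a) * ((x - a) + 2 * a)) := by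
      field_simp [ha.ne', hb.ne'] at hh; linear_combination -hh
    have hxa : a ≤ x := by
      by_contra hx
      push_neg at hx
      have h1 : 0 < (a - x) * (2 * β + (a - x)) := mul_pos (by linarith) (by linarith)
      nlinarith [he', hy0, mul_pos hα2 h1]
    have hx2 : x - a ≤ 2 * β := by
      by_contra hx
      push_neg at hx
      have h1 : 0 < (x - a) * ((x - a) - 2 * β) := mul_pos (by linarith) (by linarith)
      nlinarith [he', hy0, mul_pos hα2 h1]
    have hE : a ^ 2 * (α ^ 2 * ((x - a) * (2 * β - (x - a)))) =
        β ^ 2 * (b ^ 2 * ((x - a) * ((x - a) + 2 * a))) := by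
      linear_combination β ^ 2 * hh' - a ^ 2 * he'
    have hq : (a ^ 2 * α ^ 2 + β ^ 2 * b ^ 2) * (x - a) ^ 2
        = 2 * a * β * (a * α ^ 2 - β * b ^ 2) * (x - a) := by
      linear_combination (-1 : ℝ) * hE
    have hp : 0 ≤ 2 * a * β * ((β * b ^ 2 - a * α ^ 2) * (x - a)) :=
      mul_nonneg (by positivity) (mul_nonneg (by linarith) (by linarith))
    have hr : (2 * a * β * (a * α ^ 2 - β * b ^ 2) * (x - a))
        = -(2 * a * β * ((β * b ^ 2 - a * α ^ 2) * (x - a))) := by ring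
    have h6 : (a ^ 2 * α ^ 2 + β ^ 2 * b ^ 2) * (x - a) ^ 2
        ≤ (a ^ 2 * α ^ 2 + β ^ 2 * b ^ 2) * 0 := by
      rw [mul_zero]; linarith [hq, hp, hr]
    have hu2z : (x - a) ^ 2 ≤ 0 := le_of_mul_le_mul_left h6 hD
    have hsq : (x - a) ^ 2 = 0 := le_antisymm hu2z (sq_nonneg _)
    have hux : x = a := by
      have := (pow_eq_zero_iff two_ne_zero).mp hsq
      linarith
    refine ⟨hux, ?_⟩
    have h0 : y ^ 2 * β ^ 2 = 0 := by rw [he', hux]; ring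
    have h1 : y ^ 2 = 0 := by
      rcases mul_eq_zero.mp h0 with h1 | h1
      · exact h1
      · exact absurd h1 (ne_of_gt hβ2)
    exact (pow_eq_zero_iff two_ne_zero).mp h1
end

section
/- A real quartic polynomial 𝔓(λ) = c₄λ⁴ + c₃λ³ + c₂λ² + c₁λ + c₀ with c₄ ≠ 0 has exactly one pair of complex conjugate non-real roots (and two real roots) if and only if Δ₄ < 0, or Δ₄ = 0 and Δ₃ < 0, where Δ₄ is the discriminant of the quartic and Δ₃ = 16c₄²c₀c₂ - 18c₄²c₁² - 4c₄c₂³ + 14c₄c₁c₃c₂ - 6c₄c₀c₃² + c₂²c₃² - 3c₁c₃³. -/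
set_option maxHeartbeats 1600000

open Polynomial

private lemma card_eq_four' {α : Type*} {s : Multiset α} (h : s.card = 4) :
    ∃ a b c d, s = {a, b, c, d} := by
  have hs : s ≠ 0 := by rintro rfl; simp at h
  rcases Multiset.exists_mem_of_ne_zero hs with ⟨a, ha⟩
  obtain ⟨t, rfl⟩ := Multiset.exists_cons_of_mem ha
  have ht : t.card = 3 := by simp only [Multiset.card_cons] at h; omega
  obtain ⟨b, c, d, rfl⟩ := Multiset.card_eq_three.mp ht
  exact ⟨a, b, c, d, rfl⟩

private lemma pair_conj {s : Multiset ℂ} (hconj : s.map (starRingEnd ℂ) = s) (h2 : s.card = 2)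
    (hne : ∀ z ∈ s, z.im ≠ 0) : ∃ a : ℂ, a.im ≠ 0 ∧ s = {a, (starRingEnd ℂ) a} := by
  obtain ⟨a, b, rfl⟩ := Multiset.card_eq_two.mp h2
  have ha : a.im ≠ 0 := hne a (by simp)
  have hca : (starRingEnd ℂ) a ∈ ({a, b} : Multiset ℂ) := by
    rw [← hconj]; exact Multiset.mem_map_of_mem _ (by simp)
  have hne' : (starRingEnd ℂ) a ≠ a := fun h => ha (Complex.conj_eq_iff_im.mp h)
  rcases Multiset.mem_cons.mp hca with h | h
  · exact absurd h hne'
  · rw [Multiset.mem_singleton] at h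
    exact ⟨a, ha, by rw [← h]⟩

private lemma structure4 (R : Multiset ℂ) (hconj : R.map (starRingEnd ℂ) = R)
    (hcard : R.card = 4) :
    (∃ x y z w : ℝ, R = {(x : ℂ), (y : ℂ), (z : ℂ), (w : ℂ)}) ∨
    (∃ (a : ℂ) (x y : ℝ), a.im ≠ 0 ∧ R = {a, (starRingEnd ℂ) a, (x : ℂ), (y : ℂ)}) ∨
    (∃ a b : ℂ, a.im ≠ 0 ∧ b.im ≠ 0 ∧ R = {a, (starRingEnd ℂ) a, b, (starRingEnd ℂ) b}) := by
  classical
  set s := R.filter (fun z => z.im ≠ 0) with hs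
  set t := R.filter (fun z => ¬ z.im ≠ 0) with ht
  have hst : s + t = R := Multiset.filter_add_not _ R
  have hsim : ∀ z ∈ s, z.im ≠ 0 := fun z hz => (Multiset.mem_filter.mp hz).2
  have htim : ∀ z ∈ t, z.im = 0 := fun z hz => not_not.mp (Multiset.mem_filter.mp hz).2
  have hsconj : s.map (starRingEnd ℂ) = s := by
    conv_rhs => rw [hs, ← hconj]
    rw [Multiset.filter_map]
    congr 1
    apply Multiset.filter_congr
    intro z _
    simp [Complex.conj_im, neg_ne_zero]
  have heven : ∃ m, s.card = 2 * m := by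
    have h1 : s.filter (fun z => 0 < z.im) + s.filter (fun z => ¬ 0 < z.im) = s :=
      Multiset.filter_add_not _ s
    have h2 : s.filter (fun z => ¬ 0 < z.im) = s.filter (fun z => z.im < 0) := by
      apply Multiset.filter_congr
      intro z hz
      have := hsim z hz
      constructor
      · intro h; exact lt_of_le_of_ne (not_lt.mp h) this
      · intro h; exact not_lt.mpr h.le
    have h3 : s.filter (fun z => z.im < 0) = (s.filter (fun z => 0 < z.im)).map (starRingEnd ℂ) := by
      conv_lhs => rw [← hsconj]
      rw [Multiset.filter_map]
      congr 1
      apply Multiset.filter_congr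
      intro z _
      simp
    refine ⟨(s.filter (fun z => 0 < z.im)).card, ?_⟩
    have := congrArg Multiset.card h1
    rw [Multiset.card_add, h2, h3, Multiset.card_map] at this
    omega
  have hsle : s.card ≤ 4 := by
    rw [← hcard]; exact Multiset.card_le_card (Multiset.filter_le _ R)
  have hcards : s.card + t.card = 4 := by rw [← Multiset.card_add, hst, hcard]
  obtain ⟨m, hm⟩ := heven
  have hcases : s.card = 0 ∨ s.card = 2 ∨ s.card = 4 := by omega
  rcases hcases with h0 | h2 | h4
  · left
    have hs0 : s = 0 := Multiset.card_eq_zero.mp h0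
    have hRt : R = t := by rw [← hst, hs0, zero_add]
    obtain ⟨a, b, c, d, habcd⟩ := card_eq_four' hcard
    refine ⟨a.re, b.re, c.re, d.re, ?_⟩
    have hmem : ∀ z ∈ R, z.im = 0 := by rw [hRt]; exact htim
    rw [habcd]
    have hA : (a.re : ℂ) = a := Complex.ext (by simp) (by simp [hmem a (by rw [habcd]; simp)])
    have hB : (b.re : ℂ) = b := Complex.ext (by simp) (by simp [hmem b (by rw [habcd]; simp)])
    have hC : (c.re : ℂ) = c := Complex.ext (by simp) (by simp [hmem c (by rw [habcd]; simp)])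
    have hD : (d.re : ℂ) = d := Complex.ext (by simp) (by simp [hmem d (by rw [habcd]; simp)])
    rw [hA, hB, hC, hD]
  · right; left
    obtain ⟨a, ha, hsa⟩ := pair_conj hsconj h2 hsim
    have ht2 : t.card = 2 := by omega
    obtain ⟨x, y, hxy⟩ := Multiset.card_eq_two.mp ht2
    have hx : (x.re : ℂ) = x := Complex.ext (by simp) (by simp [htim x (by rw [hxy]; simp)])
    have hy : (y.re : ℂ) = y := Complex.ext (by simp) (by simp [htim y (by rw [hxy]; simp)])
    refine ⟨a, x.re, y.re, ha, ?_⟩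
    rw [← hst, hsa, hxy, hx, hy]
    rfl
  · right; right
    have hRs : R = s := by
      have h : t = 0 := Multiset.card_eq_zero.mp (by omega)
      rw [← hst, h, add_zero]
    have hRim : ∀ z ∈ R, z.im ≠ 0 := by rw [hRs]; exact hsim
    have hR0 : R ≠ 0 := by rintro rfl; simp at hcard
    rcases Multiset.exists_mem_of_ne_zero hR0 with ⟨a, haR⟩
    obtain ⟨T1, hT1⟩ := Multiset.exists_cons_of_mem haR
    have ha : a.im ≠ 0 := hRim a haR
    have hcaR : (starRingEnd ℂ) a ∈ R := by
      rw [← hconj]; exact Multiset.mem_map_of_mem _ haR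
    have hcane : (starRingEnd ℂ) a ≠ a := fun h => ha (Complex.conj_eq_iff_im.mp h)
    have hcaT1 : (starRingEnd ℂ) a ∈ T1 := by
      rcases Multiset.mem_cons.mp (hT1 ▸ hcaR) with h | h
      · exact absurd h hcane
      · exact h
    obtain ⟨T, hT⟩ := Multiset.exists_cons_of_mem hcaT1
    have hRT : R = a ::ₘ (starRingEnd ℂ) a ::ₘ T := by rw [hT1, hT]
    have hTconj : T.map (starRingEnd ℂ) = T := by
      have h1 : (a ::ₘ (starRingEnd ℂ) a ::ₘ T).map (starRingEnd ℂ)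
          = a ::ₘ (starRingEnd ℂ) a ::ₘ T := by rw [← hRT]; exact hconj
      rw [Multiset.map_cons, Multiset.map_cons, Complex.conj_conj] at h1
      rw [Multiset.cons_swap] at h1
      exact (Multiset.cons_inj_right _).mp ((Multiset.cons_inj_right _).mp h1)
    have hTcard : T.card = 2 := by
      have h := congrArg Multiset.card hRT
      simp only [Multiset.card_cons, hcard] at h; omega
    have hTim : ∀ z ∈ T, z.im ≠ 0 := fun z hz => hRim z (by rw [hRT]; simp [hz])
    obtain ⟨b, hb, hTb⟩ := pair_conj hTconj hTcard hTim
    exact ⟨a, b, ha, hb, by rw [hRT, hTb]; rfl⟩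

private lemma vieta4 (c₀ c₁ c₂ c₃ c₄ r1 r2 r3 r4 : ℂ)
    (h : C c₄ * X ^ 4 + C c₃ * X ^ 3 + C c₂ * X ^ 2 + C c₁ * X + C c₀
      = C c₄ * ((X - C r1) * ((X - C r2) * ((X - C r3) * (X - C r4))))) :
    c₃ = -(c₄ * (r1 + r2 + r3 + r4))
      ∧ c₂ = c₄ * (r1*r2 + r1*r3 + r1*r4 + r2*r3 + r2*r4 + r3*r4)
      ∧ c₁ = -(c₄ * (r1*r2*r3 + r1*r2*r4 + r1*r3*r4 + r2*r3*r4))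
      ∧ c₀ = c₄ * (r1*r2*r3*r4) := by
  have h' : C c₄ * X ^ 4 + C c₃ * X ^ 3 + C c₂ * X ^ 2 + C c₁ * X + C c₀
      = C c₄ * X ^ 4 + C (-(c₄ * (r1 + r2 + r3 + r4))) * X ^ 3
        + C (c₄ * (r1*r2 + r1*r3 + r1*r4 + r2*r3 + r2*r4 + r3*r4)) * X ^ 2
        + C (-(c₄ * (r1*r2*r3 + r1*r2*r4 + r1*r3*r4 + r2*r3*r4))) * X
        + C (c₄ * (r1*r2*r3*r4)) := by
    rw [h]; simp only [map_mul, map_add, map_neg]; ring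
  refine ⟨?_, ?_, ?_, ?_⟩
  · have h3 := congrArg (fun q => Polynomial.coeff q 3) h'
    simp only [coeff_add, coeff_C_mul, coeff_X_pow, coeff_C, coeff_X] at h3
    norm_num at h3; exact h3
  · have h2 := congrArg (fun q => Polynomial.coeff q 2) h'
    simp only [coeff_add, coeff_C_mul, coeff_X_pow, coeff_C, coeff_X] at h2
    norm_num at h2; exact h2
  · have h1 := congrArg (fun q => Polynomial.coeff q 1) h'
    simp only [coeff_add, coeff_C_mul, coeff_X_pow, coeff_C, coeff_X] at h1
    norm_num at h1; exact h1
  · have h0 := congrArg (fun q => Polynomial.coeff q 0) h'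
    simp only [coeff_add, coeff_C_mul, coeff_X_pow, coeff_C, coeff_X] at h0
    norm_num at h0; exact h0

open Polynomial in
/-- A real quartic `c₄λ⁴ + c₃λ³ + c₂λ² + c₁λ + c₀` with `c₄ ≠ 0` has exactly one pair
of complex conjugate non-real roots (and two real roots) if and only if `Δ₄ < 0`, or
`Δ₄ = 0` and `Δ₃ < 0`. -/
theorem quartic_one_conjugate_pair_iff_discriminants (c₀ c₁ c₂ c₃ c₄ : ℝ)
    (hc₄ : c₄ ≠ 0)
    (Δ₄ Δ₃ : ℝ)
    (hΔ₄ : Δ₄ = 256 * c₀ ^ 3 * c₄ ^ 3 - 192 * c₀ ^ 2 * c₁ * c₃ * c₄ ^ 2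
        - 128 * c₀ ^ 2 * c₂ ^ 2 * c₄ ^ 2 + 144 * c₀ ^ 2 * c₂ * c₃ ^ 2 * c₄
        - 27 * c₀ ^ 2 * c₃ ^ 4 + 144 * c₀ * c₁ ^ 2 * c₂ * c₄ ^ 2
        - 6 * c₀ * c₁ ^ 2 * c₃ ^ 2 * c₄ - 4 * c₁ ^ 3 * c₃ ^ 3
        - 80 * c₀ * c₁ * c₂ ^ 2 * c₃ * c₄ + 18 * c₀ * c₁ * c₂ * c₃ ^ 3
        + 16 * c₀ * c₂ ^ 4 * c₄ - 4 * c₀ * c₂ ^ 3 * c₃ ^ 2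
        - 27 * c₁ ^ 4 * c₄ ^ 2 + 18 * c₁ ^ 3 * c₂ * c₃ * c₄
        - 4 * c₁ ^ 2 * c₂ ^ 3 * c₄ + c₁ ^ 2 * c₂ ^ 2 * c₃ ^ 2)
    (hΔ₃ : Δ₃ = 16 * c₄ ^ 2 * c₀ * c₂ - 18 * c₄ ^ 2 * c₁ ^ 2 - 4 * c₄ * c₂ ^ 3
        + 14 * c₄ * c₁ * c₃ * c₂ - 6 * c₄ * c₀ * c₃ ^ 2 + c₂ ^ 2 * c₃ ^ 2
        - 3 * c₁ * c₃ ^ 3)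
    (p : Polynomial ℂ)
    (hp : p = C (c₄ : ℂ) * X ^ 4 + C (c₃ : ℂ) * X ^ 3 + C (c₂ : ℂ) * X ^ 2
      + C (c₁ : ℂ) * X + C (c₀ : ℂ)) :
    (p.roots.filter (fun z => z.im ≠ 0)).card = 2 ↔
      Δ₄ < 0 ∨ (Δ₄ = 0 ∧ Δ₃ < 0) := by
  have hc4 : (c₄ : ℂ) ≠ 0 := by exact_mod_cast hc₄
  have hdeg : p.natDegree = 4 := by rw [hp]; compute_degree!
  have hsplits : p.Splits := IsAlgClosed.splits p
  have hcard : p.roots.card = 4 := by rw [(splits_iff_card_roots).mp hsplits, hdeg]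
  have hlead : p.leadingCoeff = (c₄ : ℂ) := by
    rw [Polynomial.leadingCoeff, hdeg, hp]
    simp [coeff_add, coeff_C_mul, coeff_X_pow, coeff_C, coeff_X]
  have hfac : p = C (c₄ : ℂ) * (p.roots.map fun a => X - C a).prod := by
    conv_lhs => rw [hsplits.eq_prod_roots, hlead]
  have hmapself : p.map (starRingEnd ℂ) = p := by
    rw [hp]
    simp [Polynomial.map_add, Polynomial.map_mul, Polynomial.map_pow, Complex.conj_ofReal]
  have hconj : p.roots.map (starRingEnd ℂ) = p.roots := by
    rw [← hsplits.roots_map (starRingEnd ℂ), hmapself]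
  rcases structure4 p.roots hconj hcard with ⟨x, y, z, w, hR⟩ | ⟨a, x, y, ha, hR⟩ |
    ⟨a, b, ha, hb, hR⟩
  · -- four real roots
    obtain ⟨H3, H2, H1, H0⟩ := vieta4 (c₀:ℂ) (c₁:ℂ) (c₂:ℂ) (c₃:ℂ) (c₄:ℂ) ((x:ℝ):ℂ) ((y:ℝ):ℂ) ((z:ℝ):ℂ) ((w:ℝ):ℂ) (by
      rw [← hp]
      conv_lhs => rw [hfac, hR]
      simp only [Multiset.insert_eq_cons, Multiset.map_cons, Multiset.map_singleton,
        Multiset.prod_cons, Multiset.prod_singleton])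
    have h3 : c₃ = -(c₄ * (x + y + z + w)) := by exact_mod_cast H3
    have h2 : c₂ = c₄ * (x*y + x*z + x*w + y*z + y*w + z*w) := by exact_mod_cast H2
    have h1 : c₁ = -(c₄ * (x*y*z + x*y*w + x*z*w + y*z*w)) := by exact_mod_cast H1
    have h0 : c₀ = c₄ * (x*y*z*w) := by exact_mod_cast H0
    have hD4 : Δ₄ = c₄^6 * ((x-y)*(x-z)*(x-w)*(y-z)*(y-w)*(z-w))^2 := by
      rw [hΔ₄, h3, h2, h1, h0]; ring
    have hD3 : 2*Δ₃ = c₄^4 * (((x-y)*(x-z)*(y-z))^2 + ((x-y)*(x-w)*(y-w))^2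
        + ((x-z)*(x-w)*(z-w))^2 + ((y-z)*(y-w)*(z-w))^2) := by
      rw [hΔ₃, h3, h2, h1, h0]; ring
    have hD4n : 0 ≤ Δ₄ := by rw [hD4]; positivity
    have hD3n : 0 ≤ Δ₃ := by
      have hrhs : 0 ≤ c₄^4 * (((x-y)*(x-z)*(y-z))^2 + ((x-y)*(x-w)*(y-w))^2
          + ((x-z)*(x-w)*(z-w))^2 + ((y-z)*(y-w)*(z-w))^2) := by positivity
      linarith [hD3, hrhs]
    have hL : (p.roots.filter (fun z => z.im ≠ 0)).card = 0 := by
      rw [hR]; simp [Multiset.filter_cons, Multiset.filter_singleton, Complex.ofReal_im]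
    constructor
    · intro h; rw [hL] at h; exact absurd h (by norm_num)
    · rintro (h | ⟨h4, h3'⟩)
      · linarith
      · linarith
  · -- one conjugate pair and two real roots
    obtain ⟨H3, H2, H1, H0⟩ := vieta4 (c₀:ℂ) (c₁:ℂ) (c₂:ℂ) (c₃:ℂ) (c₄:ℂ) a ((starRingEnd ℂ) a) ((x:ℝ):ℂ) ((y:ℝ):ℂ) (by
      rw [← hp]
      conv_lhs => rw [hfac, hR]
      simp only [Multiset.insert_eq_cons, Multiset.map_cons, Multiset.map_singleton,
        Multiset.prod_cons, Multiset.prod_singleton])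
    have h3 : c₃ = -(c₄ * (2*a.re + x + y)) := by
      have h := congrArg Complex.re H3
      simp only [Complex.add_re, Complex.mul_re, Complex.add_im, Complex.mul_im, Complex.neg_re,
        Complex.neg_im, Complex.ofReal_re, Complex.ofReal_im, Complex.conj_re,
        Complex.conj_im] at h
      rw [h]; ring
    have h2 : c₂ = c₄ * ((a.re^2 + a.im^2) + 2*a.re*(x + y) + x*y) := by
      have h := congrArg Complex.re H2
      simp only [Complex.add_re, Complex.mul_re, Complex.add_im, Complex.mul_im, Complex.neg_re,
        Complex.neg_im, Complex.ofReal_re, Complex.ofReal_im, Complex.conj_re,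
        Complex.conj_im] at h
      rw [h]; ring
    have h1 : c₁ = -(c₄ * ((a.re^2 + a.im^2)*(x + y) + 2*a.re*(x*y))) := by
      have h := congrArg Complex.re H1
      simp only [Complex.add_re, Complex.mul_re, Complex.add_im, Complex.mul_im, Complex.neg_re,
        Complex.neg_im, Complex.ofReal_re, Complex.ofReal_im, Complex.conj_re,
        Complex.conj_im] at h
      rw [h]; ring
    have h0 : c₀ = c₄ * ((a.re^2 + a.im^2)*(x*y)) := by
      have h := congrArg Complex.re H0
      simp only [Complex.add_re, Complex.mul_re, Complex.add_im, Complex.mul_im, Complex.neg_re,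
        Complex.neg_im, Complex.ofReal_re, Complex.ofReal_im, Complex.conj_re,
        Complex.conj_im] at h
      rw [h]; ring
    have hL : (p.roots.filter (fun z => z.im ≠ 0)).card = 2 := by
      rw [hR]
      simp [Multiset.filter_cons, Multiset.filter_singleton, Complex.ofReal_im,
        Complex.conj_im, ha]
    have hD4 : Δ₄ = -(4*c₄^6*a.im^2*(x-y)^2*(((a.re-x)^2+a.im^2)*((a.re-y)^2+a.im^2))^2) := by
      rw [hΔ₄, h3, h2, h1, h0]; ring
    have hRHS : Δ₄ < 0 ∨ (Δ₄ = 0 ∧ Δ₃ < 0) := by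
      rcases eq_or_ne x y with rfl | hxy
      · right
        constructor
        · rw [hD4]; ring
        · have hD3 : Δ₃ = -(4*c₄^4*a.im^2*((x-a.re)^2+a.im^2)^2) := by
            rw [hΔ₃, h3, h2, h1, h0]; ring
          have hpos : 0 < 4*c₄^4*a.im^2*((x-a.re)^2+a.im^2)^2 := by positivity
          rw [hD3]; linarith
      · left
        have hx : x - y ≠ 0 := sub_ne_zero.mpr hxy
        have hpos : 0 < 4*c₄^6*a.im^2*(x-y)^2*(((a.re-x)^2+a.im^2)*((a.re-y)^2+a.im^2))^2 := by
          positivity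
        rw [hD4]; linarith
    exact ⟨fun _ => hRHS, fun _ => hL⟩
  · -- two conjugate pairs
    obtain ⟨H3, H2, H1, H0⟩ := vieta4 (c₀:ℂ) (c₁:ℂ) (c₂:ℂ) (c₃:ℂ) (c₄:ℂ) a ((starRingEnd ℂ) a) b ((starRingEnd ℂ) b) (by
      rw [← hp]
      conv_lhs => rw [hfac, hR]
      simp only [Multiset.insert_eq_cons, Multiset.map_cons, Multiset.map_singleton,
        Multiset.prod_cons, Multiset.prod_singleton])
    have h3 : c₃ = -(c₄ * (2*a.re + 2*b.re)) := by
      have h := congrArg Complex.re H3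
      simp only [Complex.add_re, Complex.mul_re, Complex.add_im, Complex.mul_im, Complex.neg_re,
        Complex.neg_im, Complex.ofReal_re, Complex.ofReal_im, Complex.conj_re,
        Complex.conj_im] at h
      rw [h]; ring
    have h2 : c₂ = c₄ * ((a.re^2 + a.im^2) + (b.re^2 + b.im^2) + 4*a.re*b.re) := by
      have h := congrArg Complex.re H2
      simp only [Complex.add_re, Complex.mul_re, Complex.add_im, Complex.mul_im, Complex.neg_re,
        Complex.neg_im, Complex.ofReal_re, Complex.ofReal_im, Complex.conj_re,
        Complex.conj_im] at h
      rw [h]; ring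
    have h1 : c₁ = -(c₄ * (2*a.re*(b.re^2 + b.im^2) + 2*b.re*(a.re^2 + a.im^2))) := by
      have h := congrArg Complex.re H1
      simp only [Complex.add_re, Complex.mul_re, Complex.add_im, Complex.mul_im, Complex.neg_re,
        Complex.neg_im, Complex.ofReal_re, Complex.ofReal_im, Complex.conj_re,
        Complex.conj_im] at h
      rw [h]; ring
    have h0 : c₀ = c₄ * ((a.re^2 + a.im^2)*(b.re^2 + b.im^2)) := by
      have h := congrArg Complex.re H0
      simp only [Complex.add_re, Complex.mul_re, Complex.add_im, Complex.mul_im, Complex.neg_re,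
        Complex.neg_im, Complex.ofReal_re, Complex.ofReal_im, Complex.conj_re,
        Complex.conj_im] at h
      rw [h]; ring
    have hL : (p.roots.filter (fun z => z.im ≠ 0)).card = 4 := by
      rw [hR]
      simp [Multiset.filter_cons, Multiset.filter_singleton, Complex.conj_im, ha, hb]
    have hD4 : Δ₄ = (16*c₄^6*a.im^2*b.im^2) *
        (((a.re-b.re)^2+(a.im-b.im)^2) * ((a.re-b.re)^2+(a.im+b.im)^2))^2 := by
      rw [hΔ₄, h3, h2, h1, h0]; ring
    constructor
    · intro h; rw [hL] at h; exact absurd h (by norm_num)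
    · rintro (h | ⟨h4, hd3⟩)
      · have hpos : 0 ≤ (16*c₄^6*a.im^2*b.im^2) *
            (((a.re-b.re)^2+(a.im-b.im)^2) * ((a.re-b.re)^2+(a.im+b.im)^2))^2 := by positivity
        rw [hD4] at h; linarith
      · rw [hD4] at h4
        have hfacpos : 0 < 16*c₄^6*a.im^2*b.im^2 := by positivity
        have hAB : ((a.re-b.re)^2+(a.im-b.im)^2) * ((a.re-b.re)^2+(a.im+b.im)^2) = 0 := by
          rcases mul_eq_zero.mp h4 with h' | h'
          · exact absurd h' hfacpos.ne'
          · exact pow_eq_zero_iff (by norm_num) |>.mp h'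
        have hD3z : Δ₃ = 0 := by
          rcases mul_eq_zero.mp hAB with h' | h'
          · have hz1 := (add_eq_zero_iff_of_nonneg (sq_nonneg (a.re-b.re))
              (sq_nonneg (a.im-b.im))).mp h'
            have hre : b.re = a.re :=
              (sub_eq_zero.mp ((pow_eq_zero_iff (by norm_num)).mp hz1.1)).symm
            have him : b.im = a.im :=
              (sub_eq_zero.mp ((pow_eq_zero_iff (by norm_num)).mp hz1.2)).symm
            rw [hΔ₃, h3, h2, h1, h0, hre, him]; ring
          · have hz1 := (add_eq_zero_iff_of_nonneg (sq_nonneg (a.re-b.re))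
              (sq_nonneg (a.im+b.im))).mp h'
            have hre : b.re = a.re :=
              (sub_eq_zero.mp ((pow_eq_zero_iff (by norm_num)).mp hz1.1)).symm
            have him : b.im = -a.im :=
              eq_neg_of_add_eq_zero_right ((pow_eq_zero_iff (by norm_num)).mp hz1.2)
            rw [hΔ₃, h3, h2, h1, h0, hre, him]; ring
        rw [hD3z] at hd3; exact absurd hd3 (by norm_num)
end
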